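/- For every odd natural number p ≥ 3, there exist unique rational numbers C_p, C_{p−2}, …, C_1 such that X^p + 1 = Σ_{k=0}^{(p−1)/2} C_{p−2k} · X^k · (X+1)^{p−2k} as polynomials in ℚ[X]. -/

import Mathlib

open Polynomial Finset

lemma exist_aux (n : ℕ) : ∃ C : ℕ → ℚ,
    (X ^ (2*n+1) + 1 : ℚ[X]) =
      ∑ k ∈ Finset.range (n+1), Polynomial.C (C k) * X ^ k * (X + 1) ^ (2*n+1 - 2*k) := by
  suffices h : ∀ m, (∃ C : ℕ → ℚ,
      (X ^ (2*m+1) + 1 : ℚ[X]) =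
        ∑ k ∈ Finset.range (m+1), Polynomial.C (C k) * X ^ k * (X + 1) ^ (2*m+1 - 2*k)) ∧
      (∃ C : ℕ → ℚ,
      (X ^ (2*(m+1)+1) + 1 : ℚ[X]) =
        ∑ k ∈ Finset.range (m+2), Polynomial.C (C k) * X ^ k * (X + 1) ^ (2*(m+1)+1 - 2*k)) by
    exact (h n).1
  intro m
  induction m with
  | zero =>
    constructor
    · exact ⟨fun _ => 1, by simp⟩
    · refine ⟨fun k => if k = 0 then 1 else -3, ?_⟩
      norm_num [Finset.sum_range_succ, map_ofNat]
      ring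
  | succ m ih =>
    obtain ⟨⟨C0, h0⟩, ⟨C1, h1⟩⟩ := ih
    refine ⟨⟨C1, h1⟩, ?_⟩
    show ∃ C : ℕ → ℚ, (X ^ (2*(m+2)+1) + 1 : ℚ[X]) =
      ∑ k ∈ Finset.range (m+3), Polynomial.C (C k) * X ^ k * (X + 1) ^ (2*(m+2)+1 - 2*k)
    set C : ℕ → ℚ := fun k =>
      (if k ≤ m+1 then C1 k else 0) - 2 * (if k = 0 then 0 else C1 (k-1))
        - (if k ≤ 1 then 0 else C0 (k-2)) with hC
    refine ⟨C, ?_⟩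
    have splitsum : ∑ k ∈ Finset.range (m+3), Polynomial.C (C k) * X ^ k * (X + 1) ^ (2*(m+2)+1 - 2*k)
        = (∑ k ∈ Finset.range (m+3), Polynomial.C (if k ≤ m+1 then C1 k else 0) * X ^ k * (X + 1) ^ (2*(m+2)+1 - 2*k))
          - (∑ k ∈ Finset.range (m+3), Polynomial.C (2 * (if k = 0 then 0 else C1 (k-1))) * X ^ k * (X + 1) ^ (2*(m+2)+1 - 2*k))
          - (∑ k ∈ Finset.range (m+3), Polynomial.C (if k ≤ 1 then 0 else C0 (k-2)) * X ^ k * (X + 1) ^ (2*(m+2)+1 - 2*k)) := by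
      rw [← Finset.sum_sub_distrib, ← Finset.sum_sub_distrib]
      refine Finset.sum_congr rfl fun k _ => ?_
      simp only [hC, map_sub, map_mul]
      ring
    have hA : (∑ k ∈ Finset.range (m+3), Polynomial.C (if k ≤ m+1 then C1 k else 0) * X ^ k * (X + 1) ^ (2*(m+2)+1 - 2*k))
        = (X ^ (2*(m+1)+1) + 1) * (X+1)^2 := by
      rw [Finset.sum_range_succ, if_neg (by omega), map_zero, zero_mul, zero_mul, add_zero, h1,
        Finset.sum_mul]
      refine Finset.sum_congr rfl fun k hk => ?_
      have hk' : k ≤ m + 1 := by have := Finset.mem_range.mp hk; omega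
      rw [if_pos hk']
      rw [show 2*(m+2)+1 - 2*k = (2*(m+1)+1 - 2*k) + 2 by omega, pow_add]
      ring
    have hB : (∑ k ∈ Finset.range (m+3), Polynomial.C (2 * (if k = 0 then 0 else C1 (k-1))) * X ^ k * (X + 1) ^ (2*(m+2)+1 - 2*k))
        = 2 * X * (X ^ (2*(m+1)+1) + 1) := by
      rw [Finset.sum_range_succ', if_pos rfl]
      simp only [mul_zero, map_zero, zero_mul, add_zero]
      rw [h1, Finset.mul_sum]
      refine Finset.sum_congr rfl fun k hk => ?_
      rw [if_neg (Nat.succ_ne_zero k), Nat.add_sub_cancel]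
      rw [show 2*(m+2)+1 - 2*(k+1) = 2*(m+1)+1 - 2*k by omega]
      rw [map_mul, map_ofNat]
      ring
    have hCC : (∑ k ∈ Finset.range (m+3), Polynomial.C (if k ≤ 1 then 0 else C0 (k-2)) * X ^ k * (X + 1) ^ (2*(m+2)+1 - 2*k))
        = X^2 * (X ^ (2*m+1) + 1) := by
      rw [Finset.sum_range_succ', Finset.sum_range_succ']
      rw [if_pos (by norm_num), if_pos (by norm_num)]
      simp only [map_zero, zero_mul, add_zero]
      rw [h0, Finset.mul_sum]
      refine Finset.sum_congr rfl fun k hk => ?_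
      rw [if_neg (by omega), show k + 1 + 1 - 2 = k by omega]
      rw [show 2*(m+2)+1 - 2*(k+1+1) = 2*m+1 - 2*k by omega]
      ring
    rw [splitsum, hA, hB, hCC]
    ring

lemma uniq_aux (n : ℕ) (D : ℕ → ℚ)
    (hS : ∑ k ∈ Finset.range (n+1), Polynomial.C (D k) * X ^ k * (X + 1) ^ (2*n+1 - 2*k) = (0 : ℚ[X])) :
    ∀ k ≤ n, D k = 0 := by
  have hT : ∑ k ∈ Finset.range (n+1),
      Polynomial.C (D k) * (X - 1) ^ k * X ^ (2*n+1 - 2*k) = (0 : ℚ[X]) := by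
    have h2 := congrArg (Polynomial.aeval (X - 1 : ℚ[X])) hS
    simpa [map_sum, sub_add_cancel, aeval_X, Polynomial.aeval_C, algebraMap_eq] using h2
  have step : ∀ k0, k0 ≤ n → (∀ k, k0 < k → k ≤ n → D k = 0) → D k0 = 0 := by
    intro k0 hk0 hz
    have hc := congrArg (fun f : ℚ[X] => f.coeff (2*n+1-2*k0)) hT
    simp only [Polynomial.finset_sum_coeff, Polynomial.coeff_zero] at hc
    rw [Finset.sum_eq_single k0] at hc
    · rw [Polynomial.coeff_mul_X_pow', if_pos le_rfl, Nat.sub_self] at hc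
      simp only [Polynomial.coeff_zero_eq_eval_zero, Polynomial.eval_mul, Polynomial.eval_pow,
        Polynomial.eval_sub, Polynomial.eval_X, Polynomial.eval_one, Polynomial.eval_C,
        zero_sub] at hc
      have : ((-1 : ℚ)) ^ k0 ≠ 0 := by positivity
      field_simp at hc
      exact (mul_eq_zero.mp hc).resolve_right this
    · intro k hk hne
      rw [Polynomial.coeff_mul_X_pow']
      rcases lt_or_gt_of_ne hne with h | h
      · -- k < k0 : condition false
        rw [if_neg (by omega)]
      · have hkn : k ≤ n := by simpa using Finset.mem_range_succ_iff.mp hk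
        rw [hz k h hkn]
        simp
    · intro h
      exact absurd (Finset.mem_range.mpr (by omega)) h
  have key : ∀ j k, k ≤ n → n ≤ k + j → D k = 0 := by
    intro j
    induction j with
    | zero => intro k hk hk2; exact step k hk (fun k' h1 h2 => by omega)
    | succ j ih =>
      intro k hk hk2
      rcases le_or_gt n (k + j) with h | h
      · exact ih k hk h
      · exact step k hk (fun k' h1 h2 => ih k' h2 (by omega))
  intro k hk
  exact key n k hk (by omega)

theorem exists_unique_expansion (p : ℕ) (hp : Odd p) (hp3 : 3 ≤ p) :
    ∃! C : Fin ((p - 1) / 2 + 1) → ℚ,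
      (X ^ p + 1 : ℚ[X]) =
        ∑ k : Fin ((p - 1) / 2 + 1),
          Polynomial.C (C k) * X ^ (k : ℕ) * (X + 1) ^ (p - 2 * (k : ℕ)) := by
  obtain ⟨m, hm⟩ := hp
  have hpm : p = 2 * m + 1 := by omega
  subst hpm
  have hn : (2 * m + 1 - 1) / 2 = m := by omega
  rw [hn]
  obtain ⟨C0, hC0⟩ := exist_aux m
  refine ⟨fun k => C0 (k : ℕ), ?_, ?_⟩
  · beta_reduce
    rw [Fin.sum_univ_eq_sum_range
      (fun k => Polynomial.C (C0 k) * X ^ k * (X + 1) ^ (2 * m + 1 - 2 * k)) (m + 1)]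
    exact hC0
  · intro C' hC'
    set D : ℕ → ℚ := fun j => if h : j < m + 1 then C' ⟨j, h⟩ - C0 j else 0 with hD
    have hS : ∑ k ∈ Finset.range (m + 1),
        Polynomial.C (D k) * X ^ k * (X + 1) ^ (2 * m + 1 - 2 * k) = (0 : ℚ[X]) := by
      rw [← Fin.sum_univ_eq_sum_range
        (fun k => Polynomial.C (D k) * X ^ k * (X + 1) ^ (2 * m + 1 - 2 * k)) (m + 1)]
      have : ∀ k : Fin (m + 1), D (k : ℕ) = C' k - C0 (k : ℕ) := by
        intro k
        simp only [hD, dif_pos k.isLt, Fin.eta]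
      calc ∑ k : Fin (m + 1), Polynomial.C (D (k : ℕ)) * X ^ (k : ℕ) * (X + 1) ^ (2 * m + 1 - 2 * (k : ℕ))
          = ∑ k : Fin (m + 1), (Polynomial.C (C' k) * X ^ (k : ℕ) * (X + 1) ^ (2 * m + 1 - 2 * (k : ℕ))
              - Polynomial.C (C0 (k : ℕ)) * X ^ (k : ℕ) * (X + 1) ^ (2 * m + 1 - 2 * (k : ℕ))) := by
            refine Finset.sum_congr rfl fun k _ => ?_
            rw [this k, map_sub]
            ring
        _ = 0 := by
            rw [Finset.sum_sub_distrib, ← hC']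
            rw [Fin.sum_univ_eq_sum_range
              (fun k => Polynomial.C (C0 k) * X ^ k * (X + 1) ^ (2 * m + 1 - 2 * k)) (m + 1), ← hC0]
            ring
    have hz := uniq_aux m D hS
    funext k
    have hk := hz (k : ℕ) (by omega)
    have : D (k : ℕ) = C' k - C0 (k : ℕ) := by
      simp only [hD, dif_pos k.isLt, Fin.eta]
    rw [this] at hk
    exact sub_eq_zero.mp hk
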